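/- Let l > 0 and λ > 0 with λ ∉ { (2πk/l)² : k ∈ ℕ }. Then for every continuous l-periodic function f : ℝ → ℂ there exists a unique twice continuously differentiable l-periodic function φ : ℝ → ℂ satisfying −φ''(x) − λ·φ(x) = f(x) for all x ∈ ℝ. -/

import Mathlib

open Real

/-- exp derivative helper -/
lemma expDeriv (c : ℂ) (x : ℝ) :
    HasDerivAt (fun y : ℝ => Complex.exp (c * y)) (c * Complex.exp (c * x)) x := by
  have h1 : HasDerivAt (fun y : ℝ => c * (y : ℂ)) c x := by
    simpa using ((hasDerivAt_id x).ofReal_comp).const_mul c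
  simpa [mul_comm] using h1.cexp

lemma aux_contDiff_two {φ φ1 φ2 : ℝ → ℂ} (h1 : ∀ x, HasDerivAt φ (φ1 x) x)
    (h2 : ∀ x, HasDerivAt φ1 (φ2 x) x) (hc : Continuous φ2) : ContDiff ℝ 2 φ := by
  have d1 : deriv φ = φ1 := funext fun x => (h1 x).deriv
  have d2 : deriv φ1 = φ2 := funext fun x => (h2 x).deriv
  have : ContDiff ℝ ((1 : WithTop ℕ∞) + 1) φ := by
    refine contDiff_succ_iff_deriv.2 ⟨fun x => (h1 x).differentiableAt, by simp, ?_⟩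
    rw [d1]
    exact contDiff_one_iff_deriv.2 ⟨fun x => (h2 x).differentiableAt, by rw [d2]; exact hc⟩
  rwa [show ((1 : WithTop ℕ∞) + 1) = 2 by norm_num] at this

/-- representation of homogeneous solutions -/
lemma hom_rep {μ : ℝ} (hμ : 0 < μ) {h h1 : ℝ → ℂ}
    (hd : ∀ x, HasDerivAt h (h1 x) x)
    (hd2 : ∀ x, HasDerivAt h1 (-(μ:ℂ)^2 * h x) x) :
    ∃ a b : ℂ, ∀ x : ℝ, h x =
      a * Complex.exp ((μ:ℂ) * Complex.I * x) + b * Complex.exp (-((μ:ℂ) * Complex.I * x)) := by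
  set c : ℂ := (μ:ℂ) * Complex.I with hcdef
  have hc2 : c ^ 2 = -(μ:ℂ)^2 := by
    simp [hcdef, mul_pow, Complex.I_sq]
  have hcne : c ≠ 0 := by
    simp [hcdef, Complex.I_ne_zero, Complex.ofReal_ne_zero, hμ.ne']
  -- u = h1 - c h satisfies u' = -c u
  have hu : ∀ x, HasDerivAt (fun y => h1 y - c * h y)
      (-c * (h1 x - c * h x)) x := by
    intro x
    have := (hd2 x).sub ((hd x).const_mul c)
    refine this.congr_deriv (Eq.symm ?_)
    rw [hcdef]
    linear_combination h x * (μ:ℂ)^2 * Complex.I_sq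
  have hv : ∀ x, HasDerivAt (fun y => h1 y + c * h y)
      (c * (h1 x + c * h x)) x := by
    intro x
    have := (hd2 x).add ((hd x).const_mul c)
    refine this.congr_deriv (Eq.symm ?_)
    rw [hcdef]
    linear_combination h x * (μ:ℂ)^2 * Complex.I_sq
  -- w = exp(cx) u is constant
  have hw : ∀ x : ℝ, HasDerivAt (fun y : ℝ => Complex.exp (c * y) * (h1 y - c * h y)) 0 x := by
    intro x
    have := (expDeriv c x).mul (hu x)
    refine this.congr_deriv (Eq.symm ?_)
    ring
  have hw2 : ∀ x : ℝ, HasDerivAt (fun y : ℝ => Complex.exp (-(c * y)) * (h1 y + c * h y)) 0 x := by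
    intro x
    have e : ∀ y : ℝ, Complex.exp (-(c * y)) = Complex.exp ((-c) * y) := by
      intro y; ring_nf
    have := ((expDeriv (-c) x).mul (hv x))
    simp only [← e] at this
    refine this.congr_deriv (Eq.symm ?_)
    rw [e]
    ring
  have hwconst : ∀ x : ℝ, Complex.exp (c * x) * (h1 x - c * h x) = (h1 0 - c * h 0) := by
    intro x
    have := is_const_of_deriv_eq_zero (fun y => (hw y).differentiableAt)
      (fun y => (hw y).deriv) x 0
    simpa using this
  have hw2const : ∀ x : ℝ, Complex.exp (-(c * x)) * (h1 x + c * h x) = (h1 0 + c * h 0) := by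
    intro x
    have := is_const_of_deriv_eq_zero (fun y => (hw2 y).differentiableAt)
      (fun y => (hw2 y).deriv) x 0
    simpa using this
  refine ⟨(h1 0 + c * h 0) / (2 * c), -(h1 0 - c * h 0) / (2 * c), fun x => ?_⟩
  have e1 := hwconst x
  have e2 := hw2const x
  have hne : Complex.exp (c * x) ≠ 0 := Complex.exp_ne_zero _
  have hne2 : Complex.exp (-(c * x)) ≠ 0 := Complex.exp_ne_zero _
  have hprod : Complex.exp (c * x) * Complex.exp (-(c * x)) = 1 := by
    rw [← Complex.exp_add]; simp
  have q1 : h1 x - c * h x = Complex.exp (-(c*x)) * (h1 0 - c * h 0) := by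
    calc h1 x - c * h x
        = Complex.exp (-(c*x)) * (Complex.exp (c*x) * (h1 x - c * h x)) := by
          rw [← mul_assoc, mul_comm (Complex.exp (-(c*↑x))) (Complex.exp (c*↑x)), hprod, one_mul]
      _ = _ := by rw [e1]
  have q2 : h1 x + c * h x = Complex.exp (c*x) * (h1 0 + c * h 0) := by
    calc h1 x + c * h x
        = Complex.exp (c*x) * (Complex.exp (-(c*x)) * (h1 x + c * h x)) := by
          rw [← mul_assoc, hprod, one_mul]
      _ = _ := by rw [e2]
  field_simp
  linear_combination q2 - q1

lemma kill_aux {μ : ℝ} (hμ : 0 < μ) {a b E E' : ℂ} (hE : E ≠ 1) (hE' : E' ≠ 1)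
    (H : ∀ x : ℝ, a * (E - 1) * Complex.exp ((μ:ℂ) * Complex.I * x)
        + b * (E' - 1) * Complex.exp (-((μ:ℂ) * Complex.I * x)) = 0) :
    a = 0 ∧ b = 0 := by
  have h0 := H 0
  simp only [Complex.ofReal_zero, mul_zero, neg_zero, Complex.exp_zero, mul_one] at h0
  have hx := H (π / (2 * μ))
  have harg : (μ:ℂ) * Complex.I * ((π / (2 * μ) : ℝ) : ℂ) = ((π:ℂ) / 2) * Complex.I := by
    push_cast
    have : (μ:ℂ) ≠ 0 := by exact_mod_cast hμ.ne'
    field_simp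
  have hexpI : Complex.exp (((π:ℂ) / 2) * Complex.I) = Complex.I := by
    rw [Complex.exp_mul_I]
    simp [Complex.cos_pi_div_two, Complex.sin_pi_div_two]
  have hexpI' : Complex.exp (-(((π:ℂ) / 2) * Complex.I)) = -Complex.I := by
    rw [neg_mul_eq_neg_mul, Complex.exp_mul_I]
    simp [Complex.cos_pi_div_two, Complex.sin_pi_div_two, Complex.cos_neg, Complex.sin_neg]
  rw [harg, hexpI] at hx
  rw [show -(((π:ℂ)/2) * Complex.I) = -(((π:ℂ)/2) * Complex.I) from rfl] at hx
  -- hx : a*(E-1)*I + b*(E'-1)*exp(-(π/2 I)) = 0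
  rw [hexpI'] at hx
  -- now: a(E-1)I - b(E'-1)I = 0
  have hdiff : a * (E - 1) - b * (E' - 1) = 0 := by
    have hI := Complex.I_ne_zero
    have : (a * (E - 1) - b * (E' - 1)) * Complex.I = 0 := by linear_combination hx
    rcases mul_eq_zero.1 this with h | h
    · exact h
    · exact absurd h hI
  have hP : a * (E - 1) = 0 := by linear_combination (h0 + hdiff) / 2
  have hQ : b * (E' - 1) = 0 := by linear_combination (h0 - hdiff) / 2
  constructor
  · rcases mul_eq_zero.1 hP with h | h
    · exact h
    · exact absurd h (sub_ne_zero.2 hE)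
  · rcases mul_eq_zero.1 hQ with h | h
    · exact h
    · exact absurd h (sub_ne_zero.2 hE')

lemma nonres {l lam : ℝ} (hl : 0 < l) (hlam : 0 < lam)
    (hspec : lam ∉ {x : ℝ | ∃ k : ℕ, x = (2 * π * (k : ℝ) / l) ^ 2}) :
    Complex.exp ((Real.sqrt lam : ℂ) * Complex.I * l) ≠ 1 := by
  intro hE
  set μ := Real.sqrt lam with hμdef
  have hμ : 0 < μ := Real.sqrt_pos.2 hlam
  rcases Complex.exp_eq_one_iff.1 hE with ⟨n, hn⟩
  have him : μ * l = n * (2 * π) := by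
    have := congrArg Complex.im hn
    simpa [Complex.mul_im, Complex.ofReal_re, Complex.ofReal_im] using this
  have hn0 : 0 < (n:ℝ) := by
    have h1 : 0 < μ * l := mul_pos hμ hl
    rw [him] at h1
    nlinarith [Real.pi_pos]
  have hnpos : 0 < n := by exact_mod_cast hn0
  apply hspec
  refine ⟨n.toNat, ?_⟩
  have hcast : ((n.toNat : ℕ) : ℝ) = (n : ℝ) := by
    exact_mod_cast Int.toNat_of_nonneg hnpos.le
  have hμeq : μ = 2 * π * (n.toNat : ℝ) / l := by
    rw [hcast]
    field_simp
    linarith [him]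
  have := Real.sq_sqrt hlam.le
  rw [← hμdef] at this
  rw [← this, hμeq]

/-- unique solvability of the one-dimensional periodic Helmholtz problem
`-φ'' - λ φ = f` for non-resonant `λ`. -/
theorem stmt14 (l lam : ℝ) (hl : 0 < l) (hlam : 0 < lam)
    (hspec : lam ∉ {x : ℝ | ∃ k : ℕ, x = (2 * π * (k : ℝ) / l) ^ 2}) :
    ∀ f : ℝ → ℂ, Continuous f → Function.Periodic f l →
      ∃! φ : ℝ → ℂ, ContDiff ℝ 2 φ ∧ Function.Periodic φ l ∧
        ∀ x : ℝ, -(deriv (deriv φ) x) - (lam : ℂ) * φ x = f x := by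
  intro f hf hper
  set μ := Real.sqrt lam with hμdef
  have hμ : 0 < μ := Real.sqrt_pos.2 hlam
  have hμR : μ ^ 2 = lam := Real.sq_sqrt hlam.le
  have hμne : (μ:ℂ) ≠ 0 := by exact_mod_cast hμ.ne'
  have hc2 : ((μ:ℂ)) ^ 2 = (lam:ℂ) := by exact_mod_cast congrArg Complex.ofReal hμR
  set c : ℂ := (μ:ℂ) * Complex.I with hcdef
  have hcsq : c ^ 2 = -(lam:ℂ) := by
    rw [hcdef, mul_pow, Complex.I_sq, hc2]; ring
  -- basic derivative facts
  have hlin : ∀ x : ℝ, HasDerivAt (fun y : ℝ => μ * y) μ x := fun x => by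
    simpa using (hasDerivAt_id x).const_mul μ
  have hsinC : ∀ x : ℝ, HasDerivAt (fun y : ℝ => ((Real.sin (μ * y) : ℝ) : ℂ))
      ((Real.cos (μ * x) * μ : ℝ) : ℂ) x := fun x =>
    (((Real.hasDerivAt_sin (μ * x)).comp x (hlin x))).ofReal_comp
  have hcosC : ∀ x : ℝ, HasDerivAt (fun y : ℝ => ((Real.cos (μ * y) : ℝ) : ℂ))
      ((-Real.sin (μ * x) * μ : ℝ) : ℂ) x := fun x =>
    (((Real.hasDerivAt_cos (μ * x)).comp x (hlin x))).ofReal_comp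
  have hexpN : ∀ x : ℝ, HasDerivAt (fun y : ℝ => Complex.exp (-(c * y)))
      (-c * Complex.exp (-(c * x))) x := fun x => by
    simpa [neg_mul] using expDeriv (-c) x
  -- integrands
  have hFc : Continuous fun t : ℝ => ((Real.cos (μ * t) : ℝ) : ℂ) * f t := by
    exact (Complex.continuous_ofReal.comp (Real.continuous_cos.comp
      (continuous_const.mul continuous_id))).mul hf
  have hGc : Continuous fun t : ℝ => ((Real.sin (μ * t) : ℝ) : ℂ) * f t := by
    exact (Complex.continuous_ofReal.comp (Real.continuous_sin.comp
      (continuous_const.mul continuous_id))).mul hf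
  set F : ℝ → ℂ := fun x => ∫ t in (0:ℝ)..x, ((Real.cos (μ * t) : ℝ) : ℂ) * f t with hFdef
  set G : ℝ → ℂ := fun x => ∫ t in (0:ℝ)..x, ((Real.sin (μ * t) : ℝ) : ℂ) * f t with hGdef
  have hF : ∀ x : ℝ, HasDerivAt F (((Real.cos (μ * x) : ℝ) : ℂ) * f x) x := fun x =>
    intervalIntegral.integral_hasDerivAt_right (hFc.intervalIntegrable 0 x)
      (hFc.stronglyMeasurableAtFilter _ _) hFc.continuousAt
  have hG : ∀ x : ℝ, HasDerivAt G (((Real.sin (μ * x) : ℝ) : ℂ) * f x) x := fun x =>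
    intervalIntegral.integral_hasDerivAt_right (hGc.intervalIntegrable 0 x)
      (hGc.stronglyMeasurableAtFilter _ _) hGc.continuousAt
  -- particular solution
  set φp : ℝ → ℂ := fun x =>
    (-(1:ℂ)/μ) * (((Real.sin (μ * x) : ℝ) : ℂ) * F x - ((Real.cos (μ * x) : ℝ) : ℂ) * G x)
    with hφpdef
  set φp1 : ℝ → ℂ := fun x =>
    -(((Real.cos (μ * x) : ℝ) : ℂ) * F x + ((Real.sin (μ * x) : ℝ) : ℂ) * G x) with hφp1def
  have hdφp : ∀ x : ℝ, HasDerivAt φp (φp1 x) x := by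
    intro x
    have h1 := (((hsinC x).mul (hF x)).sub ((hcosC x).mul (hG x))).const_mul (-(1:ℂ)/μ)
    refine h1.congr_deriv (Eq.symm ?_)
    simp only [hφp1def]
    push_cast
    field_simp
    ring
  have hdφp1 : ∀ x : ℝ, HasDerivAt φp1 (-(lam:ℂ) * φp x - f x) x := by
    intro x
    have h1 := (((hcosC x).mul (hF x)).add ((hsinC x).mul (hG x))).neg
    refine h1.congr_deriv (Eq.symm ?_)
    have pyth : ((Real.cos (μ * x) : ℝ) : ℂ) ^ 2 + ((Real.sin (μ * x) : ℝ) : ℂ) ^ 2 = 1 := by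
      exact_mod_cast congrArg Complex.ofReal (Real.cos_sq_add_sin_sq (μ * x))
    simp only [hφpdef]
    push_cast at pyth ⊢
    field_simp
    linear_combination ((μ:ℂ) * f x) * pyth - ((Complex.sin ((μ:ℂ)*x)) * F x - (Complex.cos ((μ:ℂ)*x)) * G x) * hc2
  -- non-resonance
  have hE1 : Complex.exp (c * l) ≠ 1 := by
    have := nonres hl hlam hspec
    simpa [hcdef, hμdef] using this
  have hE1' : Complex.exp (-(c * l)) ≠ 1 := by
    rw [Complex.exp_neg]
    simpa [inv_eq_one] using hE1
  -- shift derivative helper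
  have hdshift : ∀ {g g' : ℝ → ℂ}, (∀ y, HasDerivAt g (g' y) y) →
      ∀ x : ℝ, HasDerivAt (fun y => g (y + l)) (g' (x + l)) x := by
    intro g g' hg x
    exact HasDerivAt.comp_add_const x l (hg (x + l))
  -- the defect of periodicity of φp solves the homogeneous equation
  have hdh : ∀ x : ℝ, HasDerivAt (fun y => φp (y + l) - φp y) (φp1 (x + l) - φp1 x) x :=
    fun x => (hdshift hdφp x).sub (hdφp x)
  have hdh2 : ∀ x : ℝ, HasDerivAt (fun y => φp1 (y + l) - φp1 y)
      (-(μ:ℂ)^2 * ((fun y => φp (y + l) - φp y) x)) x := by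
    intro x
    have h1 := (hdshift hdφp1 x).sub (hdφp1 x)
    refine h1.congr_deriv (Eq.symm ?_)
    have hpf : f (x + l) = f x := hper x
    simp only [hpf]
    linear_combination (φp x - φp (x + l)) * hc2
  obtain ⟨a, b, hab⟩ := hom_rep hμ hdh hdh2
  simp only [← hcdef] at hab
  -- exponent addition formulas
  have hEadd : ∀ x : ℝ, Complex.exp (c * ((x + l : ℝ) : ℂ)) =
      Complex.exp (c * x) * Complex.exp (c * l) := by
    intro x; rw [← Complex.exp_add]; congr 1; push_cast; ring
  have hEaddN : ∀ x : ℝ, Complex.exp (-(c * ((x + l : ℝ) : ℂ))) =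
      Complex.exp (-(c * x)) * Complex.exp (-(c * l)) := by
    intro x; rw [← Complex.exp_add]; congr 1; push_cast; ring
  set α : ℂ := -a / (Complex.exp (c * l) - 1) with hαdef
  set β : ℂ := -b / (Complex.exp (-(c * l)) - 1) with hβdef
  have hα : α * (Complex.exp (c * l) - 1) = -a :=
    div_mul_cancel₀ (-a) (sub_ne_zero.2 hE1)
  have hβ : β * (Complex.exp (-(c * l)) - 1) = -b :=
    div_mul_cancel₀ (-b) (sub_ne_zero.2 hE1')
  set φ : ℝ → ℂ := fun x => φp x + α * Complex.exp (c * x) + β * Complex.exp (-(c * x))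
    with hφdef
  set φ1 : ℝ → ℂ := fun x =>
    φp1 x + α * c * Complex.exp (c * x) - β * c * Complex.exp (-(c * x)) with hφ1def
  have hdφ : ∀ x : ℝ, HasDerivAt φ (φ1 x) x := by
    intro x
    have h1 := ((hdφp x).add ((expDeriv c x).const_mul α)).add ((hexpN x).const_mul β)
    refine h1.congr_deriv (Eq.symm ?_)
    simp only [hφ1def]; ring
  have hdφ1 : ∀ x : ℝ, HasDerivAt φ1 (-(lam:ℂ) * φ x - f x) x := by
    intro x
    have h1 := ((hdφp1 x).add ((expDeriv c x).const_mul (α * c))).sub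
      ((hexpN x).const_mul (β * c))
    refine h1.congr_deriv (Eq.symm ?_)
    simp only [hφdef]
    linear_combination (-(α * Complex.exp (c * x)) - β * Complex.exp (-(c * x))) * hcsq
  have hφcont : Continuous φ := by
    have : Differentiable ℝ φ := fun x => (hdφ x).differentiableAt
    exact this.continuous
  have hC2 : ContDiff ℝ 2 φ :=
    aux_contDiff_two hdφ hdφ1 ((continuous_const.mul hφcont).sub hf)
  have hODE : ∀ x : ℝ, -(deriv (deriv φ) x) - (lam:ℂ) * φ x = f x := by
    intro x
    rw [funext fun y => (hdφ y).deriv, (hdφ1 x).deriv]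
    ring
  have hφper : Function.Periodic φ l := by
    intro x
    have key := hab x
    simp only [hφdef]
    rw [hEadd x, hEaddN x]
    linear_combination key + Complex.exp (c * x) * hα + Complex.exp (-(c * x)) * hβ
  refine ⟨φ, ⟨hC2, hφper, hODE⟩, ?_⟩
  rintro ψ ⟨hψC, hψper, hψode⟩
  -- ψ - φ solves the homogeneous problem and is periodic, hence zero
  have hψd : Differentiable ℝ ψ := hψC.differentiable (by norm_num)
  have hψd1 : Differentiable ℝ (deriv ψ) := by
    have h1 : ContDiff ℝ ((1:WithTop ℕ∞) + 1) ψ := by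
      have : ((1:WithTop ℕ∞) + 1) = 2 := by norm_num
      rw [this]; exact hψC
    exact ((contDiff_succ_iff_deriv.1 h1).2.2).differentiable one_ne_zero
  have hg1 : ∀ x : ℝ, HasDerivAt (fun y => ψ y - φ y) (deriv ψ x - φ1 x) x :=
    fun x => ((hψd x).hasDerivAt).sub (hdφ x)
  have hg2 : ∀ x : ℝ, HasDerivAt (fun y => deriv ψ y - φ1 y)
      (-(μ:ℂ)^2 * ((fun y => ψ y - φ y) x)) x := by
    intro x
    have h1 := ((hψd1 x).hasDerivAt).sub (hdφ1 x)
    refine h1.congr_deriv (Eq.symm ?_)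
    have hode := hψode x
    linear_combination hode + (φ x - ψ x) * hc2
  obtain ⟨a', b', hab'⟩ := hom_rep hμ hg1 hg2
  simp only [← hcdef] at hab'
  have H : ∀ x : ℝ, a' * (Complex.exp (c * l) - 1) * Complex.exp ((μ:ℂ) * Complex.I * x)
      + b' * (Complex.exp (-(c * l)) - 1) * Complex.exp (-((μ:ℂ) * Complex.I * x)) = 0 := by
    intro x
    have hp : ψ (x + l) - φ (x + l) = ψ x - φ x := by rw [hψper x, hφper x]
    have e1 := hab' (x + l)
    have e2 := hab' x
    rw [e1, e2] at hp
    rw [← hcdef]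
    rw [hEadd x, hEaddN x] at hp
    linear_combination hp
  obtain ⟨ha0, hb0⟩ := kill_aux hμ hE1 hE1' H
  funext x
  have := hab' x
  rw [ha0, hb0] at this
  simpa [sub_eq_zero] using this
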